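/- Let a, b, c > 0 and let f : ℝ³ → ℝ, f(x, y, z) = x²/a² + y²/b² + z²/c² − 1 (an ellipsoid). Then the set of points p ∈ ℝ³ with f(p) = 0 for which Df(p) is a scalar multiple of ω_p is exactly {(0, 0, c), (0, 0, −c)}; that is, the ellipsoid has exactly two characteristic points for the Heisenberg contact structure, namely the North and South poles (0, 0, ±c). -/

import Mathlib

lemma fderiv_ellipsoid_eval (a b c : ℝ) (p v : ℝ × ℝ × ℝ) :
    fderiv ℝ (fun p : ℝ × ℝ × ℝ => p.1 ^ 2 / a ^ 2 + p.2.1 ^ 2 / b ^ 2 + p.2.2 ^ 2 / c ^ 2 - 1) p v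
      = 2 * p.1 * v.1 / a ^ 2 + 2 * p.2.1 * v.2.1 / b ^ 2 + 2 * p.2.2 * v.2.2 / c ^ 2 := by
  have heq : (fun p : ℝ × ℝ × ℝ => p.1 ^ 2 / a ^ 2 + p.2.1 ^ 2 / b ^ 2 + p.2.2 ^ 2 / c ^ 2 - 1)
      = fun p : ℝ × ℝ × ℝ => (a ^ 2)⁻¹ * (p.1 * p.1) + (b ^ 2)⁻¹ * (p.2.1 * p.2.1) + (c ^ 2)⁻¹ * (p.2.2 * p.2.2) - 1 := by
    funext q; ring
  rw [heq]
  have h1 : HasFDerivAt (fun q : ℝ × ℝ × ℝ => q.1)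
      (ContinuousLinearMap.fst ℝ ℝ (ℝ × ℝ)) p := hasFDerivAt_fst
  have h2 : HasFDerivAt (fun q : ℝ × ℝ × ℝ => q.2.1)
      ((ContinuousLinearMap.fst ℝ ℝ ℝ).comp (ContinuousLinearMap.snd ℝ ℝ (ℝ × ℝ))) p :=
    hasFDerivAt_snd.fst
  have h3 : HasFDerivAt (fun q : ℝ × ℝ × ℝ => q.2.2)
      ((ContinuousLinearMap.snd ℝ ℝ ℝ).comp (ContinuousLinearMap.snd ℝ ℝ (ℝ × ℝ))) p :=
    hasFDerivAt_snd.snd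
  have h : HasFDerivAt (fun p : ℝ × ℝ × ℝ => (a ^ 2)⁻¹ * (p.1 * p.1) + (b ^ 2)⁻¹ * (p.2.1 * p.2.1) + (c ^ 2)⁻¹ * (p.2.2 * p.2.2) - 1) _ p :=
    ((((h1.mul h1).const_mul ((a ^ 2)⁻¹)).add
      ((h2.mul h2).const_mul ((b ^ 2)⁻¹))).add
      ((h3.mul h3).const_mul ((c ^ 2)⁻¹))).sub_const 1
  rw [h.fderiv]
  simp
  ring

/-- The Heisenberg contact form at `p`, `ω_p(v) = v₃ + (p₂v₁ − p₁v₂)/2`. -/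
noncomputable def heisenbergForm (p v : ℝ × ℝ × ℝ) : ℝ :=
  v.2.2 + (p.2.1 * v.1 - p.1 * v.2.1) / 2

/-- The ellipsoid `{x²/a² + y²/b² + z²/c² = 1}` has exactly two characteristic points
for the Heisenberg contact structure, namely the poles `(0, 0, ±c)`. -/
theorem ellipsoid_two_characteristic_points
    (a b c : ℝ) (ha : 0 < a) (hb : 0 < b) (hc : 0 < c)
    (f : ℝ × ℝ × ℝ → ℝ)
    (hf : f = fun p => p.1 ^ 2 / a ^ 2 + p.2.1 ^ 2 / b ^ 2 + p.2.2 ^ 2 / c ^ 2 - 1) :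
    {p : ℝ × ℝ × ℝ | f p = 0 ∧
        ∃ l : ℝ, ∀ v : ℝ × ℝ × ℝ, fderiv ℝ f p v = l * heisenbergForm p v} =
      {((0 : ℝ), (0 : ℝ), c), ((0 : ℝ), (0 : ℝ), -c)} := by
  subst hf
  have ha2 : (a : ℝ) ^ 2 ≠ 0 := by positivity
  have hb2 : (b : ℝ) ^ 2 ≠ 0 := by positivity
  have hc2 : (c : ℝ) ^ 2 ≠ 0 := by positivity
  ext p
  obtain ⟨x, y, z⟩ := p
  simp only [Set.mem_setOf_eq, Set.mem_insert_iff, Set.mem_singleton_iff, Prod.mk.injEq]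
  constructor
  · rintro ⟨hzero, l, hl⟩
    have e1 := hl (1, 0, 0)
    have e2 := hl (0, 1, 0)
    have e3 := hl (0, 0, 1)
    rw [fderiv_ellipsoid_eval] at e1 e2 e3
    simp only [heisenbergForm] at e1 e2 e3
    norm_num at e1 e2 e3
    -- e1 : 2*x/a^2 = l * (y/2), e2 : 2*y/b^2 = l * (-(x/2)) (roughly)
    have key : x ^ 2 / a ^ 2 + y ^ 2 / b ^ 2 = 0 := by
      linear_combination (x * e1 + y * e2) / 2
    have hxx : x ^ 2 / a ^ 2 = 0 := by
      nlinarith [div_nonneg (sq_nonneg x) (le_of_lt (pow_pos ha 2)),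
        div_nonneg (sq_nonneg y) (le_of_lt (pow_pos hb 2))]
    have hyy : y ^ 2 / b ^ 2 = 0 := by
      nlinarith [div_nonneg (sq_nonneg x) (le_of_lt (pow_pos ha 2)),
        div_nonneg (sq_nonneg y) (le_of_lt (pow_pos hb 2))]
    have hx0 : x = 0 := by
      have := (div_eq_zero_iff.mp hxx).resolve_right ha2
      exact pow_eq_zero_iff (n := 2) (by norm_num) |>.mp this
    have hy0 : y = 0 := by
      have := (div_eq_zero_iff.mp hyy).resolve_right hb2
      exact pow_eq_zero_iff (n := 2) (by norm_num) |>.mp this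
    subst hx0; subst hy0
    simp only [ne_eq, OfNat.ofNat_ne_zero, not_false_eq_true, zero_pow, zero_div, zero_add] at hzero
    have hz : (z - c) * (z + c) = 0 := by
      have : z ^ 2 / c ^ 2 = 1 := by linarith
      have hz2 : z ^ 2 = c ^ 2 := by field_simp at this; linarith
      nlinarith [hz2]
    rcases mul_eq_zero.mp hz with h | h
    · exact Or.inl ⟨rfl, rfl, by linarith⟩
    · exact Or.inr ⟨rfl, rfl, by linarith⟩
  · rintro (⟨hx, hy, hz⟩ | ⟨hx, hy, hz⟩) <;> subst hx <;> subst hy <;> rw [hz]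
    · exact ⟨by field_simp; ring, 2 * c / c ^ 2, fun v => by
        rw [fderiv_ellipsoid_eval]; simp [heisenbergForm]; ring⟩
    · exact ⟨by field_simp; ring, 2 * (-c) / c ^ 2, fun v => by
        rw [fderiv_ellipsoid_eval]; simp [heisenbergForm]; ring⟩
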